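/- Let σ_1, …, σ_p < 0, let c_1, …, c_p be real numbers all of the same sign, and set h(t) = (∑_{i=1}^p c_i/(t − σ_i))². Let A be an n×n Hermitian positive definite complex matrix with all eigenvalues contained in [a,b] where 0 < a, let v be a unit vector, and let (V_k, T̂_k, β_k, v_{k+1}) be a Lanczos relation of length k for A with starting vector v, with the eigenvalues of T̂_k lying in (a,b). Then the Gauss-rule estimate is a lower bound for v* h(A) v, i.e. e_1* h(T̂_k) e_1 ≤ v* h(A) v. -/

import Mathlib

open Matrix
open scoped ComplexOrder



section gausskey
open Polynomial Finset

lemma gauss_key {p M N : ℕ} (hM : 0 < M)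
    (σ c : Fin p → ℝ) (hσ : ∀ i, σ i < 0) (hc : ∀ i, 0 ≤ c i)
    (lam w : Fin N → ℝ) (hw : ∀ l, 0 ≤ w l) (hlam : ∀ l, 0 < lam l)
    (th om : Fin M → ℝ) (hom : ∀ j, 0 ≤ om j) (hth : ∀ j, 0 < th j)
    (hexact : ∀ m, m < 2 * M → ∑ l, w l * lam l ^ m = ∑ j, om j * th j ^ m) :
    ∑ j, om j * (∑ i, c i / (th j - σ i)) ^ 2
      ≤ ∑ l, w l * (∑ i, c i / (lam l - σ i)) ^ 2 := by
  classical
  -- node set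
  set S : Finset ℝ := Finset.image th Finset.univ with hS
  have hSpos : ∀ x ∈ S, 0 < x := by
    intro x hx; rw [hS, Finset.mem_image] at hx; obtain ⟨j, _, rfl⟩ := hx; exact hth j
  have hScard : S.card ≤ M := le_trans (Finset.card_image_le) (by simp)
  -- nodal polynomial
  set ϖ : ℝ[X] := ∏ θ ∈ S, (C θ - X) with hϖ
  set W : ℝ → ℝ := fun t => eval t ϖ with hWdef
  have hW : ∀ t, W t = ∏ θ ∈ S, (θ - t) := by
    intro t; rw [hWdef]; simp only [hϖ, eval_prod]; simp
  have hWpos : ∀ t ≤ (0:ℝ), 0 < W t := by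
    intro t ht; rw [hW]
    exact Finset.prod_pos fun x hx => by linarith [hSpos x hx]
  have hWzero : ∀ x ∈ S, W x = 0 := by
    intro x hx; rw [hW]; exact Finset.prod_eq_zero hx (by ring)
  have hWmono : ∀ s t : ℝ, s ≤ t → t ≤ 0 → W t ≤ W s := by
    intro s t hst ht
    rw [hW, hW]
    apply Finset.prod_le_prod
    · intro x hx; linarith [hSpos x hx]
    · intro x hx; linarith
  have hdegϖ : ϖ.natDegree ≤ M := by
    refine le_trans ?_ hScard
    apply le_trans (Polynomial.natDegree_prod_le _ _)
    apply le_trans (Finset.sum_le_card_nsmul _ _ 1 ?_) (by simp)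
    intro x _
    exact le_trans (natDegree_sub_le _ _) (by simp)
  -- exactness on polynomials of degree < 2M
  have polyExact : ∀ q : ℝ[X], q.natDegree < 2 * M →
      ∑ l, w l * eval (lam l) q = ∑ j, om j * eval (th j) q := by
    intro q hq
    have e1 : ∀ x : ℝ, eval x q = ∑ m ∈ range (2 * M), q.coeff m * x ^ m :=
      fun x => Polynomial.eval_eq_sum_range' hq x
    simp only [e1, Finset.mul_sum]
    rw [Finset.sum_comm, Finset.sum_comm (γ := Fin M)]
    apply Finset.sum_congr rfl
    intro m hm
    have := hexact m (Finset.mem_range.1 hm)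
    calc ∑ l, w l * (q.coeff m * lam l ^ m)
        = q.coeff m * ∑ l, w l * lam l ^ m := by rw [Finset.mul_sum]; apply sum_congr rfl; intros; ring
      _ = q.coeff m * ∑ j, om j * th j ^ m := by rw [this]
      _ = ∑ j, om j * (q.coeff m * th j ^ m) := by rw [Finset.mul_sum]; apply sum_congr rfl; intros; ring
  -- the basis polynomials B i
  set B : Fin p → ℝ[X] := fun i => (C (W (σ i)) - ϖ) /ₘ (X - C (σ i)) with hBdef
  have hB : ∀ i, (X - C (σ i)) * B i = C (W (σ i)) - ϖ := by
    intro i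
    apply Polynomial.mul_divByMonic_eq_iff_isRoot.2
    simp [Polynomial.IsRoot, hWdef]
  have hBeval : ∀ i t, (t - σ i) * eval t (B i) = W (σ i) - W t := by
    intro i t
    have := congrArg (eval t) (hB i)
    simpa [hWdef] using this
  have hdegB : ∀ i, (B i).natDegree ≤ M - 1 := by
    intro i
    rw [hBdef]
    simp only []
    rw [Polynomial.natDegree_divByMonic _ (monic_X_sub_C (σ i)), natDegree_X_sub_C]
    have : (C (W (σ i)) - ϖ).natDegree ≤ M :=
      le_trans (natDegree_sub_le _ _) (by simp [hdegϖ])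
    omega
  have hWσpos : ∀ i, 0 < W (σ i) := fun i => hWpos _ (le_of_lt (hσ i))
  -- sign of B i on nonpositive reals
  have hBsign : ∀ i, ∀ t ≤ (0:ℝ), 0 ≤ eval t (B i) * W (σ i) := by
    intro i
    have hne : ∀ t ≤ (0:ℝ), t ≠ σ i → 0 ≤ eval t (B i) * W (σ i) := by
      intro t ht hne
      have h1 := hBeval i t
      have h2 : (0:ℝ) ≤ (W (σ i) - W t) * W (σ i) * (t - σ i) := by
        rcases le_total t (σ i) with h | h
        · have hm := hWmono t (σ i) h (le_of_lt (hσ i))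
          have hp : (0:ℝ) ≤ (W t - W (σ i)) * (σ i - t) := mul_nonneg (by linarith) (by linarith)
          nlinarith [mul_nonneg (hWσpos i).le hp]
        · have hm := hWmono (σ i) t h ht
          have hp : (0:ℝ) ≤ (W (σ i) - W t) * (t - σ i) := mul_nonneg (by linarith) (by linarith)
          nlinarith [mul_nonneg (hWσpos i).le hp]
      have h3 : (0:ℝ) < (t - σ i)^2 := by
        have : t - σ i ≠ 0 := sub_ne_zero.2 hne
        positivity
      have h4 : (eval t (B i) * W (σ i)) * (t - σ i)^2 = (W (σ i) - W t) * W (σ i) * (t - σ i) := by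
        rw [← h1]; ring
      by_contra hcon
      push_neg at hcon
      nlinarith [h2, h3, h4]
    intro t ht
    rcases eq_or_ne t (σ i) with rfl | h
    · -- limit argument from the left
      have hcont : Filter.Tendsto (fun s => eval s (B i) * W (σ i)) (nhdsWithin (σ i) (Set.Iio (σ i))) (nhds (eval (σ i) (B i) * W (σ i))) := by
        apply Filter.Tendsto.mono_left _ nhdsWithin_le_nhds
        exact ((Polynomial.continuous (B i)).continuousAt).tendsto.mul tendsto_const_nhds
      refine ge_of_tendsto hcont ?_
      filter_upwards [self_mem_nhdsWithin] with s hs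
      exact hne s (by simp at hs; linarith [hσ i]) (ne_of_lt hs)
    · exact hne t ht h
  -- interpolation polynomial P
  set P : ℝ[X] := ∑ i, C (c i / W (σ i)) * B i with hPdef
  have hdegP : P.natDegree ≤ M - 1 := by
    apply Polynomial.natDegree_sum_le_of_forall_le
    intro i _
    exact le_trans (natDegree_C_mul_le _ _) (hdegB i)
  have hPnodes : ∀ x ∈ S, eval x P = ∑ i, c i / (x - σ i) := by
    intro x hx
    rw [hPdef, eval_finset_sum]
    apply Finset.sum_congr rfl
    intro i _
    have hxσ : x - σ i ≠ 0 := by have := hSpos x hx; have := hσ i; intro h; linarith [sub_eq_zero.1 h]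
    have h1 := hBeval i x
    rw [hWzero x hx, sub_zero] at h1
    have : eval x (B i) = W (σ i) / (x - σ i) := by field_simp at h1 ⊢; linarith [h1]
    rw [eval_mul, eval_C, this]
    have := (hWσpos i).ne'
    field_simp
  have hPσ : ∀ i0, 0 ≤ eval (σ i0) P := by
    intro i0
    rw [hPdef, eval_finset_sum]
    apply Finset.sum_nonneg
    intro i _
    rw [eval_mul, eval_C]
    have h1 := hBsign i (σ i0) (le_of_lt (hσ i0))
    have h2 := hWσpos i
    have : c i / W (σ i) * eval (σ i0) (B i)
        = c i * ((eval (σ i0) (B i) * W (σ i)) / (W (σ i))^2) := by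
      field_simp
    rw [this]
    exact mul_nonneg (hc i) (div_nonneg h1 (sq_nonneg _))
  -- the correction polynomials R i
  set R : Fin p → ℝ[X] := fun i => (P - C (eval (σ i) P)) /ₘ (X - C (σ i)) with hRdef
  have hR : ∀ i, (X - C (σ i)) * R i = P - C (eval (σ i) P) := fun i =>
    Polynomial.mul_divByMonic_eq_iff_isRoot.2 (by simp [Polynomial.IsRoot])
  have hReval : ∀ i t, (t - σ i) * eval t (R i) = eval t P - eval (σ i) P := by
    intro i t; have := congrArg (eval t) (hR i); simpa using this
  have hdegR : ∀ i, (R i).natDegree < 2 * M := by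
    intro i
    rw [hRdef]
    simp only []
    rw [Polynomial.natDegree_divByMonic _ (monic_X_sub_C (σ i)), natDegree_X_sub_C]
    have : (P - C (eval (σ i) P)).natDegree ≤ M - 1 :=
      le_trans (natDegree_sub_le _ _) (by simp [hdegP])
    omega
  -- the majorant polynomials Q i
  set Q : Fin p → ℝ[X] := fun i => C ((W (σ i))⁻¹ * (W (σ i))⁻¹) * (B i * (C (W (σ i)) + ϖ)) with hQdef
  have hdegQ : ∀ i, (Q i).natDegree < 2 * M := by
    intro i
    rw [hQdef]
    simp only []
    refine lt_of_le_of_lt (natDegree_C_mul_le _ _) ?_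
    refine lt_of_le_of_lt (natDegree_mul_le) ?_
    have h1 := hdegB i
    have h2 : (C (W (σ i)) + ϖ).natDegree ≤ M := le_trans (natDegree_add_le _ _) (by simp [hdegϖ])
    omega
  have hQeval : ∀ i (t : ℝ), t ≠ σ i →
      eval t (Q i) = 1 / (t - σ i) - (W t)^2 / ((W (σ i))^2 * (t - σ i)) := by
    intro i t hne
    have htσ : t - σ i ≠ 0 := sub_ne_zero.2 hne
    have hWσ := (hWσpos i).ne'
    have h1 := hBeval i t
    rw [hQdef]
    simp only [eval_mul, eval_C, eval_add]
    have hϖt : eval t ϖ = W t := rfl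
    have hb : eval t (B i) = (W (σ i) - W t) / (t - σ i) := by
      rw [eq_div_iff htσ]; linear_combination h1
    rw [hϖt, hb]
    field_simp
    ring
  have hQnodes : ∀ i, ∀ j : Fin M, eval (th j) (Q i) = 1 / (th j - σ i) := by
    intro i j
    have hmem : th j ∈ S := by rw [hS]; exact Finset.mem_image_of_mem th (Finset.mem_univ j)
    have hne : th j ≠ σ i := by have := hth j; have := hσ i; intro h; linarith
    rw [hQeval i _ hne, hWzero _ hmem]
    simp
  have hQle : ∀ i l, eval (lam l) (Q i) ≤ 1 / (lam l - σ i) := by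
    intro i l
    have hne : lam l ≠ σ i := by have := hlam l; have := hσ i; intro h; linarith
    rw [hQeval i _ hne]
    have h1 : 0 < lam l - σ i := by have := hlam l; have := hσ i; linarith
    have h2 : 0 ≤ (W (lam l))^2 / ((W (σ i))^2 * (lam l - σ i)) :=
      div_nonneg (sq_nonneg _) (by positivity)
    linarith
  have hE : ∀ i, ∑ j, om j * (1 / (th j - σ i)) ≤ ∑ l, w l * (1 / (lam l - σ i)) := by
    intro i
    calc ∑ j, om j * (1 / (th j - σ i)) = ∑ j, om j * eval (th j) (Q i) := by
          apply sum_congr rfl; intro j _; rw [hQnodes i j]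
      _ = ∑ l, w l * eval (lam l) (Q i) := (polyExact _ (hdegQ i)).symm
      _ ≤ ∑ l, w l * (1 / (lam l - σ i)) := by
          apply Finset.sum_le_sum; intro l _
          exact mul_le_mul_of_nonneg_left (hQle i l) (hw l)
  -- pointwise identity
  have key_pt : ∀ t : ℝ, (∀ i, t ≠ σ i) → (∑ i, c i / (t - σ i))^2
      = (∑ i, c i / (t - σ i) - eval t P)^2
        + 2 * (∑ i, (c i * eval t (R i) + c i * eval (σ i) P * (1 / (t - σ i))))
        - (eval t P)^2 := by
    intro t ht
    have hgP : (∑ i, c i / (t - σ i)) * eval t P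
        = ∑ i, (c i * eval t (R i) + c i * eval (σ i) P * (1 / (t - σ i))) := by
      rw [Finset.sum_mul]
      apply sum_congr rfl
      intro i _
      have htσ : t - σ i ≠ 0 := sub_ne_zero.2 (ht i)
      have h1 := hReval i t
      field_simp
      linear_combination (-(c i)) * h1
    rw [← hgP]
    ring
  -- summed representation
  have swap2 : ∀ (N' : ℕ) (u : Fin N' → ℝ) (F : Fin p → Fin N' → ℝ),
      ∑ a, u a * (2 * ∑ i, F i a) = 2 * ∑ i, ∑ a, u a * F i a := by
    intro N' u F
    calc ∑ a, u a * (2 * ∑ i, F i a) = ∑ a, ∑ i, 2 * (u a * F i a) := by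
          apply sum_congr rfl; intro a _
          have h2 : (2:ℝ) * ∑ i, F i a = ∑ i, 2 * F i a := Finset.mul_sum _ _ _
          rw [h2, Finset.mul_sum]
          apply sum_congr rfl; intro i _; ring
      _ = ∑ i, ∑ a, 2 * (u a * F i a) := Finset.sum_comm
      _ = 2 * ∑ i, ∑ a, u a * F i a := by
          rw [Finset.mul_sum]
          apply sum_congr rfl; intro i _
          rw [Finset.mul_sum]
  have repr : ∀ (N' : ℕ) (x u : Fin N' → ℝ), (∀ a i, x a ≠ σ i) →
      ∑ a, u a * (∑ i, c i / (x a - σ i))^2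
        = (∑ a, u a * (∑ i, c i / (x a - σ i) - eval (x a) P)^2)
          + 2 * (∑ i, (c i * (∑ a, u a * eval (x a) (R i))
              + c i * eval (σ i) P * (∑ a, u a * (1 / (x a - σ i)))))
          - (∑ a, u a * (eval (x a) P)^2) := by
    intro N' x u hx
    have step1 : ∑ a, u a * (∑ i, c i / (x a - σ i))^2
        = ∑ a, (u a * (∑ i, c i / (x a - σ i) - eval (x a) P)^2
            + u a * (2 * ∑ i, (c i * eval (x a) (R i) + c i * eval (σ i) P * (1 / (x a - σ i))))
            - u a * (eval (x a) P)^2) := by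
      apply sum_congr rfl; intro a _
      rw [key_pt (x a) (hx a)]
      ring
    rw [step1]
    rw [Finset.sum_sub_distrib, Finset.sum_add_distrib]
    rw [swap2 N' u (fun i a => c i * eval (x a) (R i) + c i * eval (σ i) P * (1 / (x a - σ i)))]
    have mid : (∑ i, ∑ a, u a * (c i * eval (x a) (R i) + c i * eval (σ i) P * (1 / (x a - σ i))))
        = ∑ i, (c i * (∑ a, u a * eval (x a) (R i))
            + c i * eval (σ i) P * (∑ a, u a * (1 / (x a - σ i)))) := by
      apply sum_congr rfl
      intro i _
      rw [Finset.mul_sum, Finset.mul_sum, ← Finset.sum_add_distrib]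
      apply sum_congr rfl; intro a _; ring
    rw [mid]
  -- apply to both sides
  have hxlam : ∀ (l : Fin N) (i : Fin p), lam l ≠ σ i := by
    intro l i; have := hlam l; have := hσ i; intro h; linarith
  have hxth : ∀ (j : Fin M) (i : Fin p), th j ≠ σ i := by
    intro j i; have := hth j; have := hσ i; intro h; linarith
  have hmemS : ∀ j : Fin M, th j ∈ S := fun j => by
    rw [hS]; exact Finset.mem_image_of_mem th (Finset.mem_univ j)
  have hzero : ∑ j, om j * (∑ i, c i / (th j - σ i) - eval (th j) P)^2 = 0 := by
    apply Finset.sum_eq_zero; intro j _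
    rw [hPnodes (th j) (hmemS j)]
    simp
  have hRtransfer : ∀ i, ∑ l, w l * eval (lam l) (R i) = ∑ j, om j * eval (th j) (R i) :=
    fun i => polyExact _ (hdegR i)
  have hPPdeg : (P * P).natDegree < 2 * M := by
    have := natDegree_mul_le (p := P) (q := P)
    have := hdegP
    omega
  have hPPtransfer : ∑ l, w l * (eval (lam l) P)^2 = ∑ j, om j * (eval (th j) P)^2 := by
    have h := polyExact (P * P) hPPdeg
    simpa [eval_mul, sq] using h
  rw [repr N lam w hxlam, repr M th om hxth, hzero]
  have hsq : 0 ≤ ∑ l, w l * (∑ i, c i / (lam l - σ i) - eval (lam l) P)^2 :=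
    Finset.sum_nonneg fun l _ => mul_nonneg (hw l) (sq_nonneg _)
  have hsum_le : ∑ i, (c i * (∑ j, om j * eval (th j) (R i))
          + c i * eval (σ i) P * (∑ j, om j * (1 / (th j - σ i))))
      ≤ ∑ i, (c i * (∑ l, w l * eval (lam l) (R i))
          + c i * eval (σ i) P * (∑ l, w l * (1 / (lam l - σ i)))) := by
    apply Finset.sum_le_sum
    intro i _
    have h1 : c i * (∑ j, om j * eval (th j) (R i)) = c i * (∑ l, w l * eval (lam l) (R i)) := by
      rw [hRtransfer i]
    have h2 : c i * eval (σ i) P * (∑ j, om j * (1 / (th j - σ i)))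
        ≤ c i * eval (σ i) P * (∑ l, w l * (1 / (lam l - σ i))) :=
      mul_le_mul_of_nonneg_left (hE i) (mul_nonneg (hc i) (hPσ i))
    linarith
  rw [hPPtransfer]
  linarith [hsq, hsum_le]

end gausskey

open Matrix
open scoped ComplexOrder

section helpers
variable {𝕜 : Type} [RCLike 𝕜] {N : ℕ}

lemma quad_repr (U : Matrix (Fin N) (Fin N) 𝕜) (d : Fin N → 𝕜) (x : Fin N → 𝕜) :
    star x ⬝ᵥ ((U * diagonal d * star U) *ᵥ x)
      = ∑ j, d j * (star ((star U *ᵥ x) j) * ((star U *ᵥ x) j)) := by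
  set y := star U *ᵥ x with hy
  have h1 : (U * diagonal d * star U) *ᵥ x = U *ᵥ (diagonal d *ᵥ y) := by
    rw [hy, ← mulVec_mulVec, ← mulVec_mulVec]
  rw [h1, dotProduct_mulVec]
  have h2 : star x ᵥ* U = star y := by
    rw [hy, star_mulVec, star_eq_conjTranspose, conjTranspose_conjTranspose]
  rw [h2, dotProduct]
  refine Finset.sum_congr rfl fun j _ => ?_
  rw [mulVec_diagonal]
  simp only [Pi.star_apply]
  ring

lemma myConjPow (U D : Matrix (Fin N) (Fin N) 𝕜) (hU : U * star U = 1) (hU' : star U * U = 1)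
    (m : ℕ) : (U * D * star U) ^ m = U * D ^ m * star U := by
  induction m with
  | zero => rw [pow_zero, pow_zero, Matrix.mul_one, hU]
  | succ m ih =>
      rw [pow_succ, pow_succ, ih]
      calc U * D ^ m * star U * (U * D * star U)
          = U * D ^ m * (star U * U) * D * star U := by
            simp only [Matrix.mul_assoc]
        _ = U * (D ^ m * D) * star U := by rw [hU']; simp only [Matrix.mul_one, Matrix.mul_assoc]
end helpers

section herm
variable {𝕜 : Type} [RCLike 𝕜] {N : ℕ} {A : Matrix (Fin N) (Fin N) 𝕜}

lemma herm_pow_quad (hA : A.IsHermitian) (x : Fin N → 𝕜) (m : ℕ) :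
    star x ⬝ᵥ ((A ^ m) *ᵥ x)
      = ∑ j, (RCLike.ofReal (hA.eigenvalues j) : 𝕜) ^ m *
          (star ((star (hA.eigenvectorUnitary : Matrix (Fin N) (Fin N) 𝕜) *ᵥ x) j) *
            ((star (hA.eigenvectorUnitary : Matrix (Fin N) (Fin N) 𝕜) *ᵥ x) j)) := by
  have hU : (hA.eigenvectorUnitary : Matrix (Fin N) (Fin N) 𝕜) *
      star (hA.eigenvectorUnitary : Matrix (Fin N) (Fin N) 𝕜) = 1 :=
    Unitary.coe_mul_star_self _
  have hU' : star (hA.eigenvectorUnitary : Matrix (Fin N) (Fin N) 𝕜) *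
      (hA.eigenvectorUnitary : Matrix (Fin N) (Fin N) 𝕜) = 1 :=
    Unitary.coe_star_mul_self _
  have h1 : A ^ m = (hA.eigenvectorUnitary : Matrix (Fin N) (Fin N) 𝕜) *
      diagonal ((RCLike.ofReal ∘ hA.eigenvalues) ^ m) *
      star (hA.eigenvectorUnitary : Matrix (Fin N) (Fin N) 𝕜) := by
    conv_lhs => rw [hA.spectral_theorem, Unitary.conjStarAlgAut_apply]
    rw [myConjPow _ _ hU hU', diagonal_pow]
  rw [h1, quad_repr]
  refine Finset.sum_congr rfl fun j _ => ?_
  simp [Pi.pow_apply]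

lemma herm_cfc_quad (hA : A.IsHermitian) (x : Fin N → 𝕜) (f : ℝ → ℝ) :
    star x ⬝ᵥ ((hA.cfc f) *ᵥ x)
      = ∑ j, (RCLike.ofReal (f (hA.eigenvalues j)) : 𝕜) *
          (star ((star (hA.eigenvectorUnitary : Matrix (Fin N) (Fin N) 𝕜) *ᵥ x) j) *
            ((star (hA.eigenvectorUnitary : Matrix (Fin N) (Fin N) 𝕜) *ᵥ x) j)) := by
  rw [Matrix.IsHermitian.cfc, Unitary.conjStarAlgAut_apply, quad_repr]
  rfl
end herm


section quadforms
variable {N : ℕ}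

lemma herm_pow_quad_complex' {A : Matrix (Fin N) (Fin N) ℂ} (hA : A.IsHermitian)
    (x : Fin N → ℂ) (m : ℕ)
    (hq : star x ⬝ᵥ ((A ^ m) *ᵥ x)
      = ∑ j, (RCLike.ofReal (hA.eigenvalues j) : ℂ) ^ m *
          (star ((star (hA.eigenvectorUnitary : Matrix (Fin N) (Fin N) ℂ) *ᵥ x) j) *
            ((star (hA.eigenvectorUnitary : Matrix (Fin N) (Fin N) ℂ) *ᵥ x) j))) :
    star x ⬝ᵥ ((A ^ m) *ᵥ x)
      = ((∑ j, Complex.normSq ((star (hA.eigenvectorUnitary : Matrix (Fin N) (Fin N) ℂ) *ᵥ x) j)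
          * (hA.eigenvalues j) ^ m : ℝ) : ℂ) := by
  have hco : ∀ r : ℝ, (RCLike.ofReal r : ℂ) = Complex.ofReal r := fun r => rfl
  rw [hq, Complex.ofReal_sum]
  simp only [hco]
  refine Finset.sum_congr rfl fun j _ => ?_
  set z := (star (hA.eigenvectorUnitary : Matrix (Fin N) (Fin N) ℂ) *ᵥ x) j
  have hz : star z * z = (Complex.normSq z : ℂ) := by
    rw [Complex.star_def, mul_comm, Complex.mul_conj]
  rw [hz]
  push_cast
  ring

lemma herm_cfc_quad_complex' {A : Matrix (Fin N) (Fin N) ℂ} (hA : A.IsHermitian)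
    (x : Fin N → ℂ) (f : ℝ → ℝ)
    (hq : star x ⬝ᵥ ((hA.cfc f) *ᵥ x)
      = ∑ j, (RCLike.ofReal (f (hA.eigenvalues j)) : ℂ) *
          (star ((star (hA.eigenvectorUnitary : Matrix (Fin N) (Fin N) ℂ) *ᵥ x) j) *
            ((star (hA.eigenvectorUnitary : Matrix (Fin N) (Fin N) ℂ) *ᵥ x) j))) :
    Complex.re (star x ⬝ᵥ ((hA.cfc f) *ᵥ x))
      = ∑ j, Complex.normSq ((star (hA.eigenvectorUnitary : Matrix (Fin N) (Fin N) ℂ) *ᵥ x) j)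
          * f (hA.eigenvalues j) := by
  have hco : ∀ r : ℝ, (RCLike.ofReal r : ℂ) = Complex.ofReal r := fun r => rfl
  have h2 : star x ⬝ᵥ ((hA.cfc f) *ᵥ x)
      = ((∑ j, Complex.normSq ((star (hA.eigenvectorUnitary : Matrix (Fin N) (Fin N) ℂ) *ᵥ x) j)
          * f (hA.eigenvalues j) : ℝ) : ℂ) := by
    rw [hq, Complex.ofReal_sum]
    simp only [hco]
    refine Finset.sum_congr rfl fun j _ => ?_
    set z := (star (hA.eigenvectorUnitary : Matrix (Fin N) (Fin N) ℂ) *ᵥ x) j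
    have hz : star z * z = (Complex.normSq z : ℂ) := by
      rw [Complex.star_def, mul_comm, Complex.mul_conj]
    rw [hz]
    push_cast
    ring
  rw [h2, Complex.ofReal_re]

lemma herm_pow_quad_real' {T : Matrix (Fin N) (Fin N) ℝ} (hT : T.IsHermitian)
    (x : Fin N → ℝ) (m : ℕ)
    (hq : star x ⬝ᵥ ((T ^ m) *ᵥ x)
      = ∑ j, (RCLike.ofReal (hT.eigenvalues j) : ℝ) ^ m *
          (star ((star (hT.eigenvectorUnitary : Matrix (Fin N) (Fin N) ℝ) *ᵥ x) j) *
            ((star (hT.eigenvectorUnitary : Matrix (Fin N) (Fin N) ℝ) *ᵥ x) j))) :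
    star x ⬝ᵥ ((T ^ m) *ᵥ x)
      = ∑ j, ((star (hT.eigenvectorUnitary : Matrix (Fin N) (Fin N) ℝ) *ᵥ x) j)^2
          * (hT.eigenvalues j) ^ m := by
  rw [hq]
  refine Finset.sum_congr rfl fun j _ => ?_
  set z := (star (hT.eigenvectorUnitary : Matrix (Fin N) (Fin N) ℝ) *ᵥ x) j
  have hz : star z = z := star_trivial z
  have hco : (RCLike.ofReal (hT.eigenvalues j) : ℝ) = hT.eigenvalues j := rfl
  rw [hz, hco]
  ring

lemma herm_cfc_quad_real' {T : Matrix (Fin N) (Fin N) ℝ} (hT : T.IsHermitian)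
    (x : Fin N → ℝ) (f : ℝ → ℝ)
    (hq : star x ⬝ᵥ ((hT.cfc f) *ᵥ x)
      = ∑ j, (RCLike.ofReal (f (hT.eigenvalues j)) : ℝ) *
          (star ((star (hT.eigenvectorUnitary : Matrix (Fin N) (Fin N) ℝ) *ᵥ x) j) *
            ((star (hT.eigenvectorUnitary : Matrix (Fin N) (Fin N) ℝ) *ᵥ x) j))) :
    star x ⬝ᵥ ((hT.cfc f) *ᵥ x)
      = ∑ j, ((star (hT.eigenvectorUnitary : Matrix (Fin N) (Fin N) ℝ) *ᵥ x) j)^2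
          * f (hT.eigenvalues j) := by
  rw [hq]
  refine Finset.sum_congr rfl fun j _ => ?_
  set z := (star (hT.eigenvectorUnitary : Matrix (Fin N) (Fin N) ℝ) *ᵥ x) j
  have hz : star z = z := star_trivial z
  have hco : (RCLike.ofReal (f (hT.eigenvalues j)) : ℝ) = f (hT.eigenvalues j) := rfl
  rw [hz, hco]
  ring

lemma star_single_real {k : ℕ} (e : Fin k) :
    star ((Pi.single e 1 : Fin k → ℝ)) = (Pi.single e 1 : Fin k → ℝ) := by
  funext j
  exact star_trivial _

lemma single_quad_real {k : ℕ} (e : Fin k) (M : Matrix (Fin k) (Fin k) ℝ) :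
    (Pi.single e 1 : Fin k → ℝ) ⬝ᵥ (M *ᵥ (Pi.single e 1 : Fin k → ℝ)) = M e e := by
  rw [single_dotProduct, one_mul, mulVec_single]
  simp

end quadforms



/-- A Lanczos relation of length `k` for an `n × n` Hermitian matrix `A` over `𝕜`
with starting unit vector `v`: orthonormal columns `V` with first column `v`, a real
symmetric tridiagonal matrix `T` with positive subdiagonal, `β > 0` and a unit vector
`vNext` orthogonal to the columns of `V`, such that `A V = V T + β vNext eₖ*`. -/
structure LanczosRelation (𝕜 : Type) [RCLike 𝕜] (n k : ℕ)
    (A : Matrix (Fin n) (Fin n) 𝕜) (v : Fin n → 𝕜) where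
  kpos : 0 < k
  V : Matrix (Fin n) (Fin k) 𝕜
  T : Matrix (Fin k) (Fin k) ℝ
  β : ℝ
  vNext : Fin n → 𝕜
  orthonormal : Vᴴ * V = 1
  firstCol : (fun i => V i ⟨0, kpos⟩) = v
  symm : T.IsHermitian
  tridiag : ∀ i j : Fin k, (i : ℕ) + 1 < (j : ℕ) → T i j = 0
  subdiag_pos : ∀ (i : ℕ) (h : i + 1 < k), 0 < T ⟨i + 1, h⟩ ⟨i, by omega⟩
  β_pos : 0 < β
  vNext_unit : star vNext ⬝ᵥ vNext = 1
  vNext_orth : Vᴴ *ᵥ vNext = 0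
  relation : A * V = V * T.map (algebraMap ℝ 𝕜) +
      (algebraMap ℝ 𝕜 β) • vecMulVec vNext (Pi.single ⟨k - 1, by omega⟩ 1)

lemma vecMulVec_mulVec' {α : Type} [CommRing α] {n k : ℕ} (u : Fin n → α) (w y : Fin k → α) :
    vecMulVec u w *ᵥ y = (w ⬝ᵥ y) • u := by
  funext i
  rw [Pi.smul_apply, smul_eq_mul]
  simp only [mulVec, dotProduct, vecMulVec_apply]
  rw [Finset.sum_mul]
  exact Finset.sum_congr rfl fun j _ => by ring

namespace LanczosRelation
variable {n k : ℕ} {A : Matrix (Fin n) (Fin n) ℂ} {v : Fin n → ℂ}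
  (L : LanczosRelation ℂ n k A v)

/-- `T` mapped to ℂ. -/
noncomputable def TC : Matrix (Fin k) (Fin k) ℂ := L.T.map (algebraMap ℝ ℂ)

/-- index 0 -/
def e0 : Fin k := ⟨0, L.kpos⟩

lemma TC_pow (m : ℕ) : L.TC ^ m = (L.T ^ m).map (algebraMap ℝ ℂ) := by
  have h := map_pow ((algebraMap ℝ ℂ).mapMatrix) L.T m
  simpa [TC, RingHom.mapMatrix_apply] using h.symm

lemma T_symm_apply (i j : Fin k) : L.T i j = L.T j i := by
  have := L.symm.apply j i
  simpa using this

lemma T_zero_of_lt (i j : Fin k) (h : (j : ℕ) + 1 < (i : ℕ)) : L.T i j = 0 := by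
  rw [L.T_symm_apply i j]
  exact L.tridiag j i h

lemma TC_supp (m : ℕ) : ∀ i : Fin k, m < (i : ℕ) →
    ((L.TC ^ m) *ᵥ Pi.single L.e0 1) i = 0 := by
  induction m with
  | zero =>
      intro i hi
      rw [pow_zero, one_mulVec]
      have : i ≠ L.e0 := by
        intro h; rw [h] at hi; simp [e0] at hi
      simp [Pi.single_apply, this]
  | succ m ih =>
      intro i hi
      rw [pow_succ', ← mulVec_mulVec]
      show ∑ j, L.TC i j * ((L.TC ^ m) *ᵥ Pi.single L.e0 1) j = 0
      apply Finset.sum_eq_zero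
      intro j _
      rcases lt_or_ge m (j : ℕ) with h | h
      · rw [ih j h, mul_zero]
      · have hT : L.T i j = 0 := L.T_zero_of_lt i j (by omega)
        show algebraMap ℝ ℂ (L.T i j) * _ = 0
        rw [hT, map_zero, zero_mul]

lemma krylov : ∀ m, m ≤ k - 1 →
    (A ^ m) *ᵥ v = L.V *ᵥ ((L.TC ^ m) *ᵥ Pi.single L.e0 1) := by
  intro m
  induction m with
  | zero =>
      intro _
      rw [pow_zero, pow_zero, one_mulVec, one_mulVec, mulVec_single]
      funext i
      simp only [MulOpposite.op_one, one_smul]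
      exact (congrFun L.firstCol i).symm
  | succ m ih =>
      intro hm
      have hm' : m ≤ k - 1 := by omega
      rw [pow_succ', ← mulVec_mulVec, ih hm', mulVec_mulVec, L.relation,
        add_mulVec, smul_mulVec, vecMulVec_mulVec']
      have hzero : ((Pi.single (⟨k - 1, by omega⟩ : Fin k) (1:ℂ)) ⬝ᵥ ((L.TC ^ m) *ᵥ Pi.single L.e0 1)) = 0 := by
        rw [single_dotProduct, one_mul]
        exact L.TC_supp m ⟨k - 1, by omega⟩ (by simp; omega)
      rw [hzero, zero_smul, smul_zero, add_zero, ← Matrix.mulVec_mulVec]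
      have h2 : L.TC *ᵥ ((L.TC ^ m) *ᵥ Pi.single L.e0 1) = (L.TC ^ (m + 1)) *ᵥ Pi.single L.e0 1 := by
        rw [mulVec_mulVec, ← pow_succ']
      exact congrArg (fun z => L.V *ᵥ z) h2

lemma TC_herm : L.TC.IsHermitian := by
  apply Matrix.IsHermitian.ext
  intro i j
  show star (algebraMap ℝ ℂ (L.T j i)) = algebraMap ℝ ℂ (L.T i j)
  rw [L.T_symm_apply i j]
  exact Complex.conj_ofReal _

lemma star_single' : star ((Pi.single L.e0 1 : Fin k → ℂ)) = (Pi.single L.e0 1 : Fin k → ℂ) := by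
  funext j
  rw [Pi.star_apply]
  by_cases h : j = L.e0
  · subst h; rw [Pi.single_eq_same, star_one]
  · have h1 : Pi.single (M := fun _ => ℂ) L.e0 1 j = 0 := Pi.single_eq_of_ne h 1
    rw [h1, star_zero]

/-- the crucial inner product reduction -/
lemma dot_TC (r s : ℕ) :
    star ((L.TC ^ r) *ᵥ Pi.single L.e0 1) ⬝ᵥ ((L.TC ^ s) *ᵥ Pi.single L.e0 1)
      = algebraMap ℝ ℂ ((L.T ^ (r + s)) L.e0 L.e0) := by
  rw [star_mulVec, ((L.TC_herm).pow r).eq, ← dotProduct_mulVec, L.star_single',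
    mulVec_mulVec, ← pow_add, single_dotProduct, one_mul, L.TC_pow]
  simp [mulVec_single, Matrix.map_apply]

lemma exactness (hA : A.IsHermitian) (m : ℕ) (hm : m < 2 * k) :
    star v ⬝ᵥ ((A ^ m) *ᵥ v) = algebraMap ℝ ℂ ((L.T ^ m) L.e0 L.e0) := by
  have hk := L.kpos
  have hVmove : ∀ (y z : Fin k → ℂ),
      star (L.V *ᵥ y) ⬝ᵥ (L.V *ᵥ z) = star y ⬝ᵥ z := by
    intro y z
    rw [star_mulVec, ← dotProduct_mulVec, mulVec_mulVec, L.orthonormal, one_mulVec]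
  have hAmove : ∀ (r : ℕ) (z : Fin n → ℂ),
      star v ⬝ᵥ ((A ^ r) *ᵥ z) = star ((A ^ r) *ᵥ v) ⬝ᵥ z := by
    intro r z
    rw [star_mulVec, (hA.pow r).eq, ← dotProduct_mulVec]
  by_cases hcase : m ≤ 2 * k - 2
  · have hr1 : min m (k - 1) ≤ k - 1 := min_le_right _ _
    have hs1 : m - min m (k - 1) ≤ k - 1 := by omega
    have hrs : m = min m (k - 1) + (m - min m (k - 1)) := by omega
    rw [hrs, pow_add, ← mulVec_mulVec, hAmove, L.krylov _ hr1, L.krylov _ hs1, hVmove,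
      L.dot_TC]
  · have hm2 : m = (k - 1) + (1 + (k - 1)) := by omega
    rw [hm2, pow_add, ← mulVec_mulVec, hAmove, L.krylov _ le_rfl]
    have hsplit : (A ^ (1 + (k - 1))) *ᵥ v
        = L.V *ᵥ (L.TC *ᵥ ((L.TC ^ (k - 1)) *ᵥ Pi.single L.e0 1))
          + (algebraMap ℝ ℂ L.β * ((Pi.single (⟨k - 1, by omega⟩ : Fin k) (1:ℂ))
              ⬝ᵥ ((L.TC ^ (k - 1)) *ᵥ Pi.single L.e0 1))) • L.vNext := by
      rw [pow_add, pow_one, ← mulVec_mulVec, L.krylov _ le_rfl, mulVec_mulVec, L.relation,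
        add_mulVec, smul_mulVec, vecMulVec_mulVec', smul_smul, ← Matrix.mulVec_mulVec]
      rfl
    rw [hsplit, dotProduct_add]
    have hterm2 : star (L.V *ᵥ ((L.TC ^ (k - 1)) *ᵥ Pi.single L.e0 1)) ⬝ᵥ
        ((algebraMap ℝ ℂ L.β * ((Pi.single (⟨k - 1, by omega⟩ : Fin k) (1:ℂ))
            ⬝ᵥ ((L.TC ^ (k - 1)) *ᵥ Pi.single L.e0 1))) • L.vNext) = 0 := by
      rw [dotProduct_smul, star_mulVec, ← dotProduct_mulVec, L.vNext_orth, dotProduct_zero,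
        smul_zero]
    rw [hterm2, add_zero, hVmove, mulVec_mulVec, ← pow_succ',
      show (k - 1) + 1 = 1 + (k - 1) by omega, L.dot_TC]

end LanczosRelation

theorem gauss_rule_lower_bound_aux
    {p n k : ℕ} (σ c : Fin p → ℝ) (hσ : ∀ i, σ i < 0)
    (hc : ∀ i, 0 ≤ c i)
    {a b : ℝ} (ha : 0 < a)
    {A : Matrix (Fin n) (Fin n) ℂ} (hA : A.IsHermitian)
    (hspec : ∀ i, hA.eigenvalues i ∈ Set.Icc a b)
    {v : Fin n → ℂ}
    (L : LanczosRelation ℂ n k A v)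
    (ht : ∀ j, L.symm.eigenvalues j ∈ Set.Ioo a b) :
    (Pi.single (⟨0, L.kpos⟩ : Fin k) 1 ⬝ᵥ
        (L.symm.cfc fun t => (∑ i, c i / (t - σ i)) ^ 2) *ᵥ
        Pi.single (⟨0, L.kpos⟩ : Fin k) 1 : ℝ)
      ≤ Complex.re (star v ⬝ᵥ (hA.cfc fun t => (∑ i, c i / (t - σ i)) ^ 2) *ᵥ v) := by
  classical
  set uA : Fin n → ℂ := star (hA.eigenvectorUnitary : Matrix (Fin n) (Fin n) ℂ) *ᵥ v with huA
  set wA : Fin n → ℝ := fun l => Complex.normSq (uA l) with hwA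
  set xT : Fin k → ℝ := Pi.single L.e0 1 with hxT
  set uT : Fin k → ℝ := star (L.symm.eigenvectorUnitary : Matrix (Fin k) (Fin k) ℝ) *ᵥ xT with huT
  set om : Fin k → ℝ := fun j => (uT j)^2 with homdef
  have hexact : ∀ m, m < 2 * k →
      ∑ l, wA l * hA.eigenvalues l ^ m = ∑ j, om j * L.symm.eigenvalues j ^ m := by
    intro m hm
    have h1 : star v ⬝ᵥ ((A ^ m) *ᵥ v) = ((∑ l, wA l * hA.eigenvalues l ^ m : ℝ) : ℂ) :=
      herm_pow_quad_complex' hA v m (herm_pow_quad hA v m)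
    have h2 := L.exactness hA m hm
    have h3 : (L.T ^ m) L.e0 L.e0 = ∑ j, om j * L.symm.eigenvalues j ^ m := by
      have h4 := herm_pow_quad_real' L.symm xT m (herm_pow_quad L.symm xT m)
      calc (L.T ^ m) L.e0 L.e0 = xT ⬝ᵥ ((L.T ^ m) *ᵥ xT) := (single_quad_real L.e0 _).symm
        _ = star xT ⬝ᵥ ((L.T ^ m) *ᵥ xT) := by rw [hxT, star_single_real]
        _ = ∑ j, om j * L.symm.eigenvalues j ^ m := h4
    have h5 : (∑ l, wA l * hA.eigenvalues l ^ m) = (L.T ^ m) L.e0 L.e0 := by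
      have h6 : ((∑ l, wA l * hA.eigenvalues l ^ m : ℝ) : ℂ)
          = (((L.T ^ m) L.e0 L.e0 : ℝ) : ℂ) := h1.symm.trans h2
      exact Complex.ofReal_inj.mp h6
    rw [h5, h3]
  have hRHS : Complex.re (star v ⬝ᵥ (hA.cfc fun t => (∑ i, c i / (t - σ i)) ^ 2) *ᵥ v)
      = ∑ l, wA l * (∑ i, c i / (hA.eigenvalues l - σ i)) ^ 2 := by
    have := herm_cfc_quad_complex' hA v (fun t => (∑ i, c i / (t - σ i)) ^ 2)
      (herm_cfc_quad hA v _)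
    rw [this]
  have hLHS : (Pi.single (⟨0, L.kpos⟩ : Fin k) 1 ⬝ᵥ
        (L.symm.cfc fun t => (∑ i, c i / (t - σ i)) ^ 2) *ᵥ
        Pi.single (⟨0, L.kpos⟩ : Fin k) 1 : ℝ)
      = ∑ j, om j * (∑ i, c i / (L.symm.eigenvalues j - σ i)) ^ 2 := by
    have h4 := herm_cfc_quad_real' L.symm xT (fun t => (∑ i, c i / (t - σ i)) ^ 2)
      (herm_cfc_quad L.symm xT _)
    calc (Pi.single (⟨0, L.kpos⟩ : Fin k) 1 ⬝ᵥ
        (L.symm.cfc fun t => (∑ i, c i / (t - σ i)) ^ 2) *ᵥ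
        Pi.single (⟨0, L.kpos⟩ : Fin k) 1 : ℝ)
        = star xT ⬝ᵥ ((L.symm.cfc fun t => (∑ i, c i / (t - σ i)) ^ 2) *ᵥ xT) := by
          rw [hxT, star_single_real]
          rfl
      _ = ∑ j, om j * (∑ i, c i / (L.symm.eigenvalues j - σ i)) ^ 2 := h4
  rw [hLHS, hRHS]
  exact gauss_key L.kpos σ c hσ hc hA.eigenvalues wA
    (fun l => Complex.normSq_nonneg _)
    (fun l => lt_of_lt_of_le ha (hspec l).1)
    L.symm.eigenvalues om (fun j => sq_nonneg _)
    (fun j => lt_trans ha (ht j).1) hexact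


/-- **The Gauss rule estimate is a lower bound** for `v* h(A) v` when
`h(t) = (∑ᵢ cᵢ/(t - σᵢ))²` with all poles `σᵢ < 0` and coefficients `cᵢ` of one sign,
and `A` is Hermitian positive definite with spectrum in `[a,b] ⊆ (0,∞)`. -/
theorem gauss_rule_lower_bound
    {p n k : ℕ} (σ c : Fin p → ℝ) (hσ : ∀ i, σ i < 0)
    (hc : (∀ i, 0 ≤ c i) ∨ (∀ i, c i ≤ 0))
    {a b : ℝ} (ha : 0 < a)
    {A : Matrix (Fin n) (Fin n) ℂ} (hA : A.IsHermitian) (hApd : A.PosDef)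
    (hspec : ∀ i, hA.eigenvalues i ∈ Set.Icc a b)
    {v : Fin n → ℂ} (hv : star v ⬝ᵥ v = 1)
    (L : LanczosRelation ℂ n k A v)
    (ht : ∀ j, L.symm.eigenvalues j ∈ Set.Ioo a b) :
    (Pi.single (⟨0, L.kpos⟩ : Fin k) 1 ⬝ᵥ
        (L.symm.cfc fun t => (∑ i, c i / (t - σ i)) ^ 2) *ᵥ
        Pi.single (⟨0, L.kpos⟩ : Fin k) 1 : ℝ)
      ≤ Complex.re (star v ⬝ᵥ (hA.cfc fun t => (∑ i, c i / (t - σ i)) ^ 2) *ᵥ v) := by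
  rcases hc with hc | hc
  · exact gauss_rule_lower_bound_aux σ c hσ hc ha hA hspec L ht
  · have hfun : (fun t : ℝ => (∑ i, c i / (t - σ i)) ^ 2)
        = (fun t : ℝ => (∑ i, (-c) i / (t - σ i)) ^ 2) := by
      funext t
      have hneg : ∑ i, (-c) i / (t - σ i) = -∑ i, c i / (t - σ i) := by
        rw [← Finset.sum_neg_distrib]
        exact Finset.sum_congr rfl fun i _ => by simp [neg_div]
      rw [hneg, neg_sq]
    rw [hfun]
    exact gauss_rule_lower_bound_aux σ (-c) hσ (fun i => neg_nonneg.2 (hc i)) ha hA hspec L ht
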